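/- Let p be an odd prime and let D ∈ ℤ/pℤ be a quadratic nonresidue, i.e., there is no c ∈ ℤ/pℤ with c² = D. For x, y ∈ ℤ/pℤ let R_{x,y} be the additive subgroup of (ℤ/pℤ)⁴ generated by (1, x, y, 0) and (0, −y, −D·x, 1), and let R_∞ be the additive subgroup generated by (0, 1, 0, 0) and (0, 0, 1, 0). Then each R_{x,y} and R_∞ has exactly p² elements; R_∞ ∩ R_{x,y} = {0} for all x, y; and R_{x₁,y₁} ∩ R_{x₂,y₂} = {0} whenever (x₁, y₁) ≠ (x₂, y₂). -/

import Mathlib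

lemma mem_closure_pair' {M : Type*} [AddCommGroup M] {p : ℕ} [NeZero p] [Module (ZMod p) M]
    (v w z : M) :
    z ∈ AddSubgroup.closure {v, w} ↔ ∃ a b : ZMod p, z = a • v + b • w := by
  constructor
  · intro hz
    induction hz using AddSubgroup.closure_induction with
    | mem g hg =>
      rcases hg with rfl | rfl
      · exact ⟨1, 0, by simp⟩
      · exact ⟨0, 1, by simp⟩
    | zero => exact ⟨0, 0, by simp⟩
    | add g h _ _ hg hh =>
      obtain ⟨a, b, rfl⟩ := hg
      obtain ⟨a', b', rfl⟩ := hh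
      exact ⟨a + a', b + b', by module⟩
    | neg g _ hg =>
      obtain ⟨a, b, rfl⟩ := hg
      exact ⟨-a, -b, by module⟩
  · rintro ⟨a, b, rfl⟩
    have hv : v ∈ AddSubgroup.closure {v, w} := AddSubgroup.subset_closure (by simp)
    have hw : w ∈ AddSubgroup.closure {v, w} := AddSubgroup.subset_closure (by simp)
    have h1 : a • v = a.val • v := by rw [← Nat.cast_smul_eq_nsmul (ZMod p), ZMod.natCast_val, ZMod.cast_id]
    have h2 : b • w = b.val • w := by rw [← Nat.cast_smul_eq_nsmul (ZMod p), ZMod.natCast_val, ZMod.cast_id]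
    rw [h1, h2]
    exact add_mem (AddSubgroup.nsmul_mem _ hv _) (AddSubgroup.nsmul_mem _ hw _)

lemma card_closure_pair {p : ℕ} [NeZero p] (v w : Fin 4 → ZMod p)
    (hinj : ∀ a b a' b' : ZMod p, a • v + b • w = a' • v + b' • w → a = a' ∧ b = b') :
    Nat.card (AddSubgroup.closure {v, w}) = p ^ 2 := by
  have hb : Function.Bijective (fun q : ZMod p × ZMod p =>
      (⟨q.1 • v + q.2 • w, (mem_closure_pair' (p := p) v w _).2 ⟨q.1, q.2, rfl⟩⟩ :
        AddSubgroup.closure {v, w})) := by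
    constructor
    · rintro ⟨a, b⟩ ⟨a', b'⟩ h
      have := hinj a b a' b' (congrArg Subtype.val h)
      simp [Prod.ext_iff, this.1, this.2]
    · rintro ⟨z, hz⟩
      obtain ⟨a, b, rfl⟩ := (mem_closure_pair' (p := p) v w z).1 hz
      exact ⟨(a, b), rfl⟩
  rw [← Nat.card_eq_of_bijective _ hb, Nat.card_prod, Nat.card_zmod, sq]

theorem subgroups_pairwise_trivial
    (p : ℕ) [Fact p.Prime] (hp : Odd p)
    (D : ZMod p) (hD : ∀ c : ZMod p, c ^ 2 ≠ D)
    (R : ZMod p → ZMod p → AddSubgroup (Fin 4 → ZMod p))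
    (hR : ∀ x y, R x y = AddSubgroup.closure {![1, x, y, 0], ![0, -y, -D * x, 1]})
    (Rinf : AddSubgroup (Fin 4 → ZMod p))
    (hRinf : Rinf = AddSubgroup.closure {![0, 1, 0, 0], ![0, 0, 1, 0]}) :
    (∀ x y, Nat.card (R x y) = p ^ 2) ∧
    Nat.card Rinf = p ^ 2 ∧
    (∀ x y, Rinf ⊓ R x y = ⊥) ∧
    (∀ x₁ y₁ x₂ y₂, (x₁, y₁) ≠ (x₂, y₂) → R x₁ y₁ ⊓ R x₂ y₂ = ⊥) := by
  have hmemR : ∀ x y z, z ∈ R x y ↔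
      ∃ a b : ZMod p, z = a • ![1, x, y, 0] + b • ![0, -y, -D * x, 1] := by
    intro x y z; rw [hR]; exact mem_closure_pair' _ _ _
  have hcoord : ∀ (x y a b : ZMod p),
      a • ![1, x, y, 0] + b • ![0, -y, -D * x, 1] =
        ![a, a * x - b * y, a * y - b * (D * x), b] := by
    intro x y a b
    funext i
    fin_cases i <;> simp [Pi.add_apply, Pi.smul_apply, smul_eq_mul] <;> ring
  refine ⟨?_, ?_, ?_, ?_⟩
  · intro x y
    rw [hR]
    apply card_closure_pair
    intro a b a' b' h
    rw [hcoord, hcoord] at h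
    constructor
    · have := congrFun h 0; simpa using this
    · have := congrFun h 3; simpa using this
  · rw [hRinf]
    apply card_closure_pair
    intro a b a' b' h
    constructor
    · have := congrFun h 1; simpa using this
    · have := congrFun h 2; simpa using this
  · intro x y
    rw [eq_bot_iff]
    intro z hz
    obtain ⟨hz1, hz2⟩ := hz
    rw [hRinf] at hz1
    obtain ⟨a, b, rfl⟩ := (mem_closure_pair' (p := p) _ _ _).1 hz1
    obtain ⟨a', b', h⟩ := (hmemR x y _).1 hz2
    rw [hcoord] at h
    have h0 : a' = 0 := by have := congrFun h 0; simpa using this.symm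
    have h3 : b' = 0 := by have := congrFun h 3; simpa using this.symm
    have : (a • ![0, 1, 0, 0] + b • ![0, 0, 1, 0] : Fin 4 → ZMod p) = 0 := by
      rw [h, h0, h3]
      funext i; fin_cases i <;> simp
    rw [this]; exact AddSubgroup.zero_mem ⊥
  · intro x₁ y₁ x₂ y₂ hne
    rw [eq_bot_iff]
    intro z hz
    obtain ⟨hz1, hz2⟩ := hz
    obtain ⟨a, b, rfl⟩ := (hmemR x₁ y₁ _).1 hz1
    obtain ⟨a', b', h⟩ := (hmemR x₂ y₂ _).1 hz2
    rw [hcoord, hcoord] at h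
    have h0 : a = a' := by have := congrFun h 0; simpa using this
    have h3 : b = b' := by have := congrFun h 3; simpa using this
    subst h0 h3
    have h1 : a * (x₁ - x₂) = b * (y₁ - y₂) := by
      have := congrFun h 1; simp at this; linear_combination this
    have h2 : a * (y₁ - y₂) = b * (D * (x₁ - x₂)) := by
      have := congrFun h 2; simp at this; linear_combination this
    set u := x₁ - x₂ with hu
    set v := y₁ - y₂ with hv
    have huv : u ≠ 0 ∨ v ≠ 0 := by
      by_contra hc
      push_neg at hc
      apply hne
      have e1 : x₁ = x₂ := sub_eq_zero.1 hc.1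
      have e2 : y₁ = y₂ := sub_eq_zero.1 hc.2
      rw [e1, e2]
    have key : a ^ 2 = D * b ^ 2 := by
      have e1 : (a ^ 2 - D * b ^ 2) * u = 0 := by linear_combination a * h1 + b * h2
      have e2 : (a ^ 2 - D * b ^ 2) * v = 0 := by linear_combination a * h2 + D * b * h1
      rcases huv with hu0 | hv0
      · rcases mul_eq_zero.1 e1 with h | h
        · linear_combination h
        · exact absurd h hu0
      · rcases mul_eq_zero.1 e2 with h | h
        · linear_combination h
        · exact absurd h hv0
    have hb0 : b = 0 := by
      by_contra hb
      apply hD (a * b⁻¹)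
      field_simp
      linear_combination key
    have ha0 : a = 0 := by
      have : a ^ 2 = 0 := by rw [hb0] at key; simpa using key
      exact pow_eq_zero_iff (by norm_num) |>.1 this
    rw [ha0, hb0]
    have : ((0 : ZMod p) • ![1, x₁, y₁, 0] + (0 : ZMod p) • ![0, -y₁, -D * x₁, 1] : Fin 4 → ZMod p) = 0 := by
      simp
    rw [this]; exact AddSubgroup.zero_mem ⊥
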